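/- Let n ≥ 3 be an integer and J_n = {0,…,n−2} ∪ {n+1,…,2n−1}. Let (m_k)_{k∈J_n} be positive integers with m_{2n−1} ≥ 3. Suppose there exist nonzero complex numbers z_k (for k ∈ J_n with k ≤ 2n−2), each a periodic point of minimal period m_k of the map f_0(w) = w^n, such that the square matrix with rows and columns indexed by J_n ∖ {2n−1} and with (k,i)-entry z_k^{−n^{m_k−1}}·P_{n,i,m_k}(z_k) is invertible. Then there exists a nonzero complex number z_{2n−1}, a periodic point of minimal period m_{2n−1} of f_0, such that the full (2n−2)×(2n−2) matrix with rows and columns indexed by J_n and with (k,i)-entry z_k^{−n^{m_k−1}}·P_{n,i,m_k}(z_k) is invertible. -/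

import Mathlib

/-- The set of periodic points `z ∈ ℂ` of minimal period `m` of the map `f₀(w) = wⁿ`:
`f₀^∘m(z) = z` and `f₀^∘r(z) ≠ z` for all `1 ≤ r < m`. -/
def perSet (n m : ℕ) : Set ℂ :=
  {z : ℂ | (fun w : ℂ => w ^ n)^[m] z = z ∧
    ∀ r, 1 ≤ r → r < m → (fun w : ℂ => w ^ n)^[r] z ≠ z}

/-- The polynomial `P_{n,j,m} ∈ ℂ[z]` from Proposition 4.3:
`P_{n,j,m}(z) = (j n^{m-1} - n^m)(z^{(j+1)n^{m-1}-1} + ∑_{i=0}^{m-2} z^{n^i(j-n)+n^{m-1}})`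
for `0 ≤ j ≤ n-2` (where `n^i(j-n) + n^{m-1} = n^{m-1} - n^i (n-j)` is a nonnegative
integer), `P_{n,j,m}(z) = (j n^{m-1} - n^m) ∑_{i=0}^{m-1} z^{n^i(j-n)+n^{m-1}}` for
`n+1 ≤ j ≤ 2n-2`, and
`P_{n,j,m}(z) = (j n^{m-1} - n^m)(z + ∑_{i=0}^{m-2} z^{n^i(n-1)+n^{m-1}})` for `j = 2n-1`. -/
noncomputable def P (n j m : ℕ) : Polynomial ℂ :=
  Polynomial.C ((j : ℂ) * (n : ℂ) ^ (m - 1) - (n : ℂ) ^ m) *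
    (if j ≤ n - 2 then
      Polynomial.X ^ ((j + 1) * n ^ (m - 1) - 1) +
        ∑ i ∈ Finset.range (m - 1), Polynomial.X ^ (n ^ (m - 1) - n ^ i * (n - j))
    else if j ≤ 2 * n - 2 then
      ∑ i ∈ Finset.range m, Polynomial.X ^ (n ^ i * (j - n) + n ^ (m - 1))
    else
      Polynomial.X +
        ∑ i ∈ Finset.range (m - 1), Polynomial.X ^ (n ^ i * (n - 1) + n ^ (m - 1)))

/-- The index set `J_n = {0,…,n-2} ∪ {n+1,…,2n-1}`. -/
def Jset (n : ℕ) : Finset ℕ :=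
  (Finset.range (2 * n)).filter (fun k => k ≠ n - 1 ∧ k ≠ n)

lemma iter_pow (n : ℕ) : ∀ (k : ℕ) (z : ℂ), (fun w : ℂ => w ^ n)^[k] z = z ^ n ^ k := by
  intro k
  induction k with
  | zero => intro z; simp
  | succ k ih =>
    intro z
    rw [Function.iterate_succ_apply]
    simp only [ih (z ^ n)]
    rw [← pow_mul, ← pow_succ']

lemma geomSumLt {n : ℕ} (hn : 2 ≤ n) : ∀ k, (∑ d ∈ Finset.range k, n ^ d) < n ^ k := by
  intro k
  induction k with
  | zero => simp
  | succ k ih =>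
    rw [Finset.sum_range_succ, pow_succ]
    have h1 : 1 ≤ n ^ k := Nat.one_le_pow _ _ (by omega)
    nlinarith

lemma badsum {n : ℕ} (hn : 3 ≤ n) : ∀ k, 1 ≤ k →
    (∑ d ∈ Finset.Ioo 0 k, (n ^ d - 1)) + 2 ≤ n ^ k := by
  intro k
  induction k with
  | zero => omega
  | succ k ih =>
    intro _
    rcases Nat.eq_zero_or_pos k with rfl | hk
    · have : Finset.Ioo 0 1 = (∅ : Finset ℕ) := by decide
      simp [this]; omega
    · have hins : Finset.Ioo 0 (k+1) = insert k (Finset.Ioo 0 k) := by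
        ext x; simp [Finset.mem_Ioo]; omega
      rw [hins, Finset.sum_insert (by simp)]
      have h2 := ih hk
      have h3 : 2 * n ^ k ≤ n ^ (k+1) := by
        rw [pow_succ]; nlinarith [Nat.one_le_pow k n (by omega)]
      omega

lemma det_updateRow_finset_sum {α ι : Type*} [DecidableEq α] [Fintype α]
    (A : Matrix α α ℂ) (j : α) (s : Finset ι) (f : ι → α → ℂ) :
    (A.updateRow j (∑ x ∈ s, f x)).det = ∑ x ∈ s, (A.updateRow j (f x)).det := by
  classical
  induction s using Finset.induction_on with
  | empty =>
    simp only [Finset.sum_empty]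
    exact Matrix.det_eq_zero_of_row_eq_zero j (by simp)
  | insert _ _ h ih =>
    rw [Finset.sum_insert h, Matrix.det_updateRow_add, ih, Finset.sum_insert h]


lemma pow_facts {n M : ℕ} (hn : 3 ≤ n) (hM : 3 ≤ M) :
    n * n ≤ n ^ (M - 1) ∧ 9 ≤ n ^ (M - 1) := by
  have h1 : n ^ 2 ≤ n ^ (M - 1) := Nat.pow_le_pow_right (by omega) (by omega)
  have h2 : 9 ≤ n ^ 2 := by nlinarith
  constructor
  · rw [← sq]; exact h1
  · omega

lemma P_coeff_one_eq_zero {n M i : ℕ} (hn : 3 ≤ n) (hM : 3 ≤ M) (hi : i < 2 * n)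
    (h3 : i ≠ 2 * n - 1) : (P n i M).coeff 1 = 0 := by
  obtain ⟨hnn, h9⟩ := pow_facts hn hM
  rw [P, Polynomial.coeff_C_mul]
  by_cases hc : i ≤ n - 2
  · rw [if_pos hc, Polynomial.coeff_add, Polynomial.coeff_X_pow, Polynomial.finset_sum_coeff]
    have e0 : ¬ (1 = (i + 1) * n ^ (M - 1) - 1) := by
      have : 1 * n ^ (M - 1) ≤ (i + 1) * n ^ (M - 1) :=
        Nat.mul_le_mul_right _ (by omega)
      omega
    rw [if_neg e0]
    have hsum : (∑ j ∈ Finset.range (M - 1),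
        (Polynomial.X ^ (n ^ (M - 1) - n ^ j * (n - i)) : Polynomial ℂ).coeff 1) = 0 := by
      apply Finset.sum_eq_zero
      intro j hj
      rw [Polynomial.coeff_X_pow, if_neg]
      rcases Nat.eq_zero_or_pos j with rfl | hjpos
      · simp only [pow_zero, one_mul]
        have h3n : 3 * n ≤ n * n := by nlinarith
        omega
      · intro heq
        have hd : n ∣ (n ^ (M - 1) - n ^ j * (n - i)) :=
          Nat.dvd_sub (dvd_pow_self n (by omega)) (Dvd.dvd.mul_right (dvd_pow_self n (by omega)) _)
        rw [← heq] at hd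
        have := Nat.le_of_dvd one_pos hd
        omega
    rw [hsum]
    ring
  · have hc2 : i ≤ 2 * n - 2 := by omega
    rw [if_neg hc, if_pos hc2, Polynomial.finset_sum_coeff]
    have hsum : (∑ j ∈ Finset.range M,
        (Polynomial.X ^ (n ^ j * (i - n) + n ^ (M - 1)) : Polynomial ℂ).coeff 1) = 0 := by
      apply Finset.sum_eq_zero
      intro j hj
      rw [Polynomial.coeff_X_pow, if_neg]
      omega
    rw [hsum]
    ring

lemma P_coeff_one_top {n M : ℕ} (hn : 3 ≤ n) (hM : 3 ≤ M) :
    (P n (2 * n - 1) M).coeff 1 =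
      ((2 * n - 1 : ℕ) : ℂ) * (n : ℂ) ^ (M - 1) - (n : ℂ) ^ M := by
  obtain ⟨hnn, h9⟩ := pow_facts hn hM
  rw [P, if_neg (by omega), if_neg (by omega), Polynomial.coeff_C_mul, Polynomial.coeff_add,
    Polynomial.coeff_X_one, Polynomial.finset_sum_coeff]
  have hsum : (∑ j ∈ Finset.range (M - 1),
      (Polynomial.X ^ (n ^ j * (n - 1) + n ^ (M - 1)) : Polynomial ℂ).coeff 1) = 0 := by
    apply Finset.sum_eq_zero
    intro j hj
    rw [Polynomial.coeff_X_pow, if_neg]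
    omega
  rw [hsum]
  ring

lemma P_coeff_one_top_ne {n M : ℕ} (hn : 3 ≤ n) (hM : 3 ≤ M) :
    (P n (2 * n - 1) M).coeff 1 ≠ 0 := by
  rw [P_coeff_one_top hn hM]
  have hexp : M = (M - 1) + 1 := by omega
  have hcast : ((2 * n - 1 : ℕ) : ℂ) = 2 * (n : ℂ) - 1 := by
    push_cast [show (1:ℕ) ≤ 2 * n by omega]; ring
  have hp : (n : ℂ) ^ M = (n : ℂ) ^ (M - 1) * (n : ℂ) := by
    conv_lhs => rw [hexp]
    rw [pow_succ]
  rw [hcast, hp]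
  have h1 : (2 * (n : ℂ) - 1) * (n : ℂ) ^ (M - 1) - (n : ℂ) ^ (M - 1) * (n : ℂ)
      = (n : ℂ) ^ (M - 1) * ((n : ℂ) - 1) := by ring
  rw [h1]
  apply mul_ne_zero
  · exact pow_ne_zero _ (Nat.cast_ne_zero.mpr (by omega))
  · intro h
    have : (n : ℂ) = 1 := by linear_combination h
    have : n = 1 := by exact_mod_cast this
    omega

lemma P_natDegree_le {n M i : ℕ} (hn : 3 ≤ n) (hM : 3 ≤ M) (hi : i < 2 * n) :
    (P n i M).natDegree ≤ (n - 1) * n ^ (M - 1) := by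
  obtain ⟨hnn, h9⟩ := pow_facts hn hM
  have hpos : 1 ≤ (n - 1) * n ^ (M - 1) := by
    have : 1 * 1 ≤ (n - 1) * n ^ (M - 1) := Nat.mul_le_mul (by omega) (by omega)
    omega
  rw [P]
  refine le_trans (Polynomial.natDegree_C_mul_le _ _) ?_
  by_cases hc : i ≤ n - 2
  · rw [if_pos hc]
    refine le_trans (Polynomial.natDegree_add_le _ _) (max_le ?_ ?_)
    · rw [Polynomial.natDegree_X_pow]
      have : (i + 1) * n ^ (M - 1) ≤ (n - 1) * n ^ (M - 1) :=
        Nat.mul_le_mul_right _ (by omega)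
      omega
    · apply Polynomial.natDegree_sum_le_of_forall_le
      intro j hj
      rw [Polynomial.natDegree_X_pow]
      have : n ^ (M - 1) - n ^ j * (n - i) ≤ 1 * n ^ (M - 1) := by omega
      calc n ^ (M - 1) - n ^ j * (n - i) ≤ 1 * n ^ (M-1) := by omega
        _ ≤ (n - 1) * n ^ (M - 1) := Nat.mul_le_mul_right _ (by omega)
  · by_cases hc2 : i ≤ 2 * n - 2
    · rw [if_neg hc, if_pos hc2]
      apply Polynomial.natDegree_sum_le_of_forall_le
      intro j hj
      rw [Polynomial.natDegree_X_pow]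
      have hj' : j ≤ M - 1 := by
        have := Finset.mem_range.mp hj; omega
      have h1 : n ^ j * (i - n) ≤ n ^ (M - 1) * (n - 2) :=
        Nat.mul_le_mul (Nat.pow_le_pow_right (by omega) hj') (by omega)
      have h2 : n ^ (M - 1) * (n - 2) + n ^ (M - 1) = (n - 1) * n ^ (M - 1) := by
        rw [mul_comm (n - 1)]
        have : n - 1 = (n - 2) + 1 := by omega
        rw [this, Nat.mul_add, Nat.mul_one]
      omega
    · rw [if_neg hc, if_neg hc2]
      refine le_trans (Polynomial.natDegree_add_le _ _) (max_le ?_ ?_)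
      · rw [Polynomial.natDegree_X]; exact hpos
      · apply Polynomial.natDegree_sum_le_of_forall_le
        intro j hj
        rw [Polynomial.natDegree_X_pow]
        have hj' : j ≤ M - 2 := by
          have := Finset.mem_range.mp hj; omega
        have h1 : n ^ j * (n - 1) ≤ n ^ (M - 2) * n :=
          Nat.mul_le_mul (Nat.pow_le_pow_right (by omega) hj') (by omega)
        have h2 : n ^ (M - 2) * n = n ^ (M - 1) := by
          rw [← pow_succ]; congr 1; omega
        have h3 : n ^ (M - 1) + n ^ (M - 1) ≤ (n - 1) * n ^ (M - 1) := by
          have : 2 * n ^ (M - 1) ≤ (n - 1) * n ^ (M - 1) :=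
            Nat.mul_le_mul_right _ (by omega)
          omega
        omega

lemma mem_Jset_iff {n k : ℕ} : k ∈ Jset n ↔ (k < 2 * n ∧ k ≠ n - 1 ∧ k ≠ n) := by
  simp [Jset, Finset.mem_filter, Finset.mem_range]

lemma mem_Jset_top {n : ℕ} (hn : 3 ≤ n) : 2 * n - 1 ∈ Jset n :=
  mem_Jset_iff.mpr (by omega)

/-- Splitting `J_n` as the filtered part plus the top index `2n-1`. -/
def JEquiv (n : ℕ) (hn : 3 ≤ n) :
    ({x // x ∈ (Jset n).filter (· ≤ 2 * n - 2)} ⊕ Unit) ≃ {x // x ∈ Jset n} where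
  toFun := Sum.elim (fun j => ⟨(j : ℕ), Finset.mem_of_mem_filter _ j.2⟩)
    (fun _ => ⟨2 * n - 1, mem_Jset_top hn⟩)
  invFun := fun k => if h : (k : ℕ) ≤ 2 * n - 2
    then Sum.inl ⟨(k : ℕ), Finset.mem_filter.mpr ⟨k.2, h⟩⟩ else Sum.inr ()
  left_inv := by
    rintro (j | ⟨⟩)
    · simp only [Sum.elim_inl]
      exact dif_pos (Finset.mem_filter.mp j.2).2
    · simp only [Sum.elim_inr]
      exact dif_neg (show ¬ (2 * n - 1 ≤ 2 * n - 2) by omega)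
  right_inv := by
    intro k
    simp only []
    by_cases h : (k : ℕ) ≤ 2 * n - 2
    · rw [dif_pos h]
      rfl
    · rw [dif_neg h]
      simp only [Sum.elim_inr]
      have := (mem_Jset_iff.mp k.2).1
      exact Subtype.ext (by simp; omega)

/-- Lemma 6.5 (final inductive step, case `m_{2n-1} ≥ 3`): for `n ≥ 3`, if there are
nonzero periodic points `z_k` of minimal periods `m_k` (for `k ∈ J_n`, `k ≤ 2n-2`)
making the matrix with `(k,i)`-entry `z_k^{-n^{m_k-1}} P_{n,i,m_k}(z_k)` invertible,
then there is a nonzero periodic point `z_{2n-1}` of minimal period `m_{2n-1}` such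
that the full `(2n-2)×(2n-2)` matrix indexed by `J_n` is invertible. -/
theorem step_two (n : ℕ) (hn : 3 ≤ n) (m : ℕ → ℕ)
    (hm1 : ∀ k ∈ Jset n, 1 ≤ m k)
    (hm2 : 3 ≤ m (2 * n - 1))
    (z : ℕ → ℂ)
    (hz : ∀ k ∈ (Jset n).filter (· ≤ 2 * n - 2), z k ≠ 0 ∧ z k ∈ perSet n (m k))
    (hdet : (Matrix.of fun (k i : ((Jset n).filter (· ≤ 2 * n - 2) : Finset ℕ)) =>
        z (k : ℕ) ^ (-((n : ℤ) ^ (m (k : ℕ) - 1))) *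
          (P n (i : ℕ) (m (k : ℕ))).eval (z (k : ℕ))).det ≠ 0) :
    ∃ w : ℂ, w ≠ 0 ∧ w ∈ perSet n (m (2 * n - 1)) ∧
      (Matrix.of fun (k i : (Jset n : Finset ℕ)) =>
        Function.update z (2 * n - 1) w (k : ℕ) ^ (-((n : ℤ) ^ (m (k : ℕ) - 1))) *
          (P n (i : ℕ) (m (k : ℕ))).eval (Function.update z (2 * n - 1) w (k : ℕ))).det
        ≠ 0 := by
  classical
  set M := m (2 * n - 1) with hMdef
  set k₀ : {x // x ∈ Jset n} := ⟨2 * n - 1, mem_Jset_top hn⟩ with hk₀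
  set C : Matrix {x // x ∈ Jset n} {x // x ∈ Jset n} ℂ :=
    Matrix.of fun k i => z (k : ℕ) ^ (-((n : ℤ) ^ (m (k : ℕ) - 1))) *
      (P n (i : ℕ) (m (k : ℕ))).eval (z (k : ℕ)) with hC
  set cf : {x // x ∈ Jset n} → ℂ := fun i => (C.updateRow k₀ (Pi.single i 1)).det with hcf
  set Q : Polynomial ℂ := ∑ i : {x // x ∈ Jset n}, cf i • P n (i : ℕ) M with hQ
  set g := JEquiv n hn with hg
  obtain ⟨hnn, h9⟩ := pow_facts hn hm2
  -- the cofactor at k₀ is the given determinant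
  have hgne : ∀ j : {x // x ∈ (Jset n).filter (· ≤ 2 * n - 2)}, g (Sum.inl j) ≠ k₀ := by
    intro j h
    have h1 : (j : ℕ) = 2 * n - 1 := congrArg Subtype.val h
    have h2 := (Finset.mem_filter.mp j.2).2
    omega
  have hcf0 : cf k₀ ≠ 0 := by
    have hsub : ((C.updateRow k₀ (Pi.single k₀ 1)).submatrix g g) =
        Matrix.fromBlocks
          (Matrix.of fun (k i : ((Jset n).filter (· ≤ 2 * n - 2) : Finset ℕ)) =>
            z (k : ℕ) ^ (-((n : ℤ) ^ (m (k : ℕ) - 1))) *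
              (P n (i : ℕ) (m (k : ℕ))).eval (z (k : ℕ)))
          (Matrix.of fun (k : ((Jset n).filter (· ≤ 2 * n - 2) : Finset ℕ)) (_ : Unit) =>
            C (g (Sum.inl k)) k₀)
          0 1 := by
      ext i j
      rcases i with a | a <;> rcases j with b | b
      · rw [Matrix.submatrix_apply, Matrix.updateRow_ne (hgne a)]
        rfl
      · rw [Matrix.submatrix_apply, Matrix.updateRow_ne (hgne a)]
        rfl
      · rw [Matrix.submatrix_apply]
        have hga : g (Sum.inr a) = k₀ := rfl
        rw [hga, Matrix.updateRow_self]
        rw [Pi.single_eq_of_ne (hgne b)]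
        rfl
      · rw [Matrix.submatrix_apply]
        have hga : g (Sum.inr a) = k₀ := rfl
        rw [hga, Matrix.updateRow_self, Pi.single_eq_same]
        have : a = b := rfl
        rw [this, Matrix.fromBlocks_apply₂₂, Matrix.one_apply_eq]
    have hdet2 : cf k₀ = (Matrix.of fun (k i : ((Jset n).filter (· ≤ 2 * n - 2) : Finset ℕ)) =>
        z (k : ℕ) ^ (-((n : ℤ) ^ (m (k : ℕ) - 1))) *
          (P n (i : ℕ) (m (k : ℕ))).eval (z (k : ℕ))).det := by
      rw [hcf]
      simp only []
      rw [← Matrix.det_submatrix_equiv_self g, hsub, Matrix.det_fromBlocks_zero₂₁,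
        Matrix.det_one, mul_one]
    rw [hdet2]
    exact hdet
  -- facts about indices
  have hJlt : ∀ k : {x // x ∈ Jset n}, (k : ℕ) < 2 * n := fun k => (mem_Jset_iff.mp k.2).1
  -- Q is nonzero
  have hQcoeff : Q.coeff 1 = cf k₀ * (P n (2 * n - 1) M).coeff 1 := by
    rw [hQ, Polynomial.finset_sum_coeff]
    rw [Finset.sum_eq_single k₀]
    · rw [Polynomial.coeff_smul, smul_eq_mul]
    · intro b _ hb
      rw [Polynomial.coeff_smul, smul_eq_mul,
        P_coeff_one_eq_zero hn hm2 (hJlt b) (fun h => hb (Subtype.ext h)), mul_zero]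
    · intro h
      exact absurd (Finset.mem_univ k₀) h
  have hQne : Q ≠ 0 := by
    intro h0
    rw [h0, Polynomial.coeff_zero] at hQcoeff
    exact mul_ne_zero hcf0 (P_coeff_one_top_ne hn hm2) hQcoeff.symm
  have hQdeg : Q.natDegree ≤ (n - 1) * n ^ (M - 1) := by
    rw [hQ]
    apply Polynomial.natDegree_sum_le_of_forall_le
    intro i _
    exact le_trans (Polynomial.natDegree_smul_le _ _) (P_natDegree_le hn hm2 (hJlt i))
  -- choose a periodic point avoiding roots of Q
  have hnM : n ≤ n ^ M := Nat.le_self_pow (by omega) n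
  have hNpos : 0 < n ^ M - 1 := by omega
  set T := Polynomial.nthRootsFinset (n ^ M - 1) (1 : ℂ) with hT
  have hTcard : T.card = n ^ M - 1 :=
    (Complex.isPrimitiveRoot_exp _ (by omega)).card_nthRootsFinset
  set Bad := (Finset.Ioo 0 (M - 1)).biUnion
    (fun d => Polynomial.nthRootsFinset (n ^ d - 1) (1 : ℂ)) with hBad
  have hBadcard : Bad.card + 2 ≤ n ^ (M - 1) := by
    have h1 : Bad.card ≤ ∑ d ∈ Finset.Ioo 0 (M - 1), (n ^ d - 1) := by
      refine le_trans (Finset.card_biUnion_le) (Finset.sum_le_sum ?_)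
      intro d hd
      have hd1 : 0 < d := (Finset.mem_Ioo.mp hd).1
      have : n ≤ n ^ d := Nat.le_self_pow (by omega) n
      exact ((Complex.isPrimitiveRoot_exp (n ^ d - 1) (by omega)).card_nthRootsFinset).le
    have h2 := badsum hn (M - 1) (by omega)
    omega
  set rootsQ := Q.roots.toFinset with hrootsQ
  have hrootsQcard : rootsQ.card ≤ (n - 1) * n ^ (M - 1) :=
    le_trans (Multiset.toFinset_card_le _) (le_trans (Polynomial.card_roots' Q) hQdeg)
  have hXY : (n - 1) * n ^ (M - 1) + n ^ (M - 1) = n * n ^ (M - 1) := by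
    rw [← Nat.succ_mul]
    congr 1
    omega
  have hYM : n * n ^ (M - 1) = n ^ M := by
    rw [← pow_succ']
    congr 1
    omega
  have hcard : (Bad ∪ rootsQ).card < T.card := by
    have h1 := Finset.card_union_le Bad rootsQ
    rw [hTcard]
    omega
  have hnotsub : ¬ T ⊆ Bad ∪ rootsQ := fun hsubs =>
    absurd (Finset.card_le_card hsubs) (by omega)
  obtain ⟨w, hwT, hw2⟩ := Finset.not_subset.mp hnotsub
  have hwpow : w ^ (n ^ M - 1) = 1 := (Polynomial.mem_nthRootsFinset hNpos 1).mp hwT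
  have hw0 : w ≠ 0 := by
    intro h
    rw [h, zero_pow (by omega)] at hwpow
    exact one_ne_zero hwpow.symm
  have hwBad : w ∉ Bad := fun h => hw2 (Finset.mem_union_left _ h)
  have hwroots : w ∉ rootsQ := fun h => hw2 (Finset.mem_union_right _ h)
  have hQw : Q.eval w ≠ 0 := fun h =>
    hwroots (Multiset.mem_toFinset.mpr ((Polynomial.mem_roots hQne).mpr h))
  -- w is a periodic point of minimal period M
  have hfix : (fun w : ℂ => w ^ n)^[M] w = w := by
    rw [iter_pow]
    have hexp : n ^ M = (n ^ M - 1) + 1 := by omega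
    rw [hexp, pow_succ, hwpow, one_mul]
  have hper : w ∈ perSet n M := by
    refine ⟨hfix, ?_⟩
    intro r hr1 hrM hiter
    have hPd : Function.IsPeriodicPt (fun w : ℂ => w ^ n) (Nat.gcd r M) w :=
      Function.IsPeriodicPt.gcd hiter hfix
    set d := Nat.gcd r M with hd
    have hd1 : 0 < d := Nat.gcd_pos_of_pos_left M hr1
    have hdM : d ∣ M := Nat.gcd_dvd_right r M
    have hdlt : d < M := lt_of_le_of_lt (Nat.gcd_le_left M hr1) hrM
    have hd2 : d ≤ M - 2 := by
      obtain ⟨c, hc⟩ := hdM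
      have hc2 : 2 ≤ c := by
        rcases Nat.lt_or_ge c 2 with h | h
        · interval_cases c <;> omega
        · exact h
      have h2d : d * 2 ≤ d * c := Nat.mul_le_mul_left d hc2
      omega
    have hwd : w ^ n ^ d = w := by
      have := hPd
      rwa [Function.IsPeriodicPt, Function.IsFixedPt, iter_pow] at this
    have hnd : n ≤ n ^ d := Nat.le_self_pow (by omega) n
    have hwd1 : w ^ (n ^ d - 1) = 1 := by
      have hexp : n ^ d = (n ^ d - 1) + 1 := by omega
      rw [hexp, pow_succ] at hwd
      have := mul_right_cancel₀ hw0 (hwd.trans (one_mul w).symm)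
      exact this
    exact hwBad (Finset.mem_biUnion.mpr ⟨d, Finset.mem_Ioo.mpr ⟨hd1, by omega⟩,
      (Polynomial.mem_nthRootsFinset (by omega) 1).mpr hwd1⟩)
  refine ⟨w, hw0, hper, ?_⟩
  -- identify the big matrix with an updated row of C
  have hA : (Matrix.of fun (k i : (Jset n : Finset ℕ)) =>
        Function.update z (2 * n - 1) w (k : ℕ) ^ (-((n : ℤ) ^ (m (k : ℕ) - 1))) *
          (P n (i : ℕ) (m (k : ℕ))).eval (Function.update z (2 * n - 1) w (k : ℕ)))
      = C.updateRow k₀ (fun i => w ^ (-((n : ℤ) ^ (M - 1))) * (P n (i : ℕ) M).eval w) := by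
    ext k i
    by_cases hk : k = k₀
    · subst hk
      rw [Matrix.updateRow_self, Matrix.of_apply]
      have hu : Function.update z (2 * n - 1) w ((k₀ : {x // x ∈ Jset n}) : ℕ) = w :=
        Function.update_self _ _ _
      rw [hu]
    · rw [Matrix.updateRow_ne hk, Matrix.of_apply, hC, Matrix.of_apply]
      have hkne : (k : ℕ) ≠ 2 * n - 1 := fun h => hk (Subtype.ext h)
      rw [Function.update_of_ne hkne]
  rw [hA]
  have hsmul : (fun i : {x // x ∈ Jset n} => w ^ (-((n : ℤ) ^ (M - 1))) * (P n (i : ℕ) M).eval w)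
      = (w ^ (-((n : ℤ) ^ (M - 1))) • (fun i : {x // x ∈ Jset n} => (P n (i : ℕ) M).eval w)
          : {x // x ∈ Jset n} → ℂ) := rfl
  rw [hsmul, Matrix.det_updateRow_smul]
  have hrow : (fun i : {x // x ∈ Jset n} => (P n (i : ℕ) M).eval w)
      = ∑ x : {x // x ∈ Jset n}, ((P n (x : ℕ) M).eval w) •
          (Pi.single x (1 : ℂ) : {x // x ∈ Jset n} → ℂ) := by
    funext i
    rw [Finset.sum_apply]
    simp [Pi.single_apply]
  rw [hrow, det_updateRow_finset_sum]
  have hterm : ∀ x : {x // x ∈ Jset n},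
      (C.updateRow k₀ (((P n (x : ℕ) M).eval w) •
          (Pi.single x (1 : ℂ) : {x // x ∈ Jset n} → ℂ))).det
        = (P n (x : ℕ) M).eval w * cf x := fun x => Matrix.det_updateRow_smul C k₀ _ _
  rw [Finset.sum_congr rfl (fun x _ => hterm x)]
  have hQeval : Q.eval w = ∑ x : {x // x ∈ Jset n}, (P n (x : ℕ) M).eval w * cf x := by
    rw [hQ, Polynomial.eval_finset_sum]
    exact Finset.sum_congr rfl fun x _ => by rw [Polynomial.eval_smul, smul_eq_mul, mul_comm]
  rw [← hQeval]
  exact mul_ne_zero (zpow_ne_zero _ hw0) hQw
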